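/- Let X be a binomial random variable with parameters n ≥ 1 and p ∈ [0,1], and set h = (1 − (3/4)p)^n. Then E[(1/4)^X] = h, E[(1/16)^X] = (1 − (15/16)p)^n, and consequently Var[(1/4)^X] = (1 − (15/16)p)^n − h² ≤ h^{5/4} − h². -/

import Mathlib

open MeasureTheory ProbabilityTheory

lemma binom_integral_aux
    {Ω : Type*} [MeasurableSpace Ω] (μ : Measure Ω) [IsProbabilityMeasure μ]
    (n : ℕ) (p : ℝ) (hp0 : 0 ≤ p) (hp1 : p ≤ 1)
    (X : Ω → ℕ) (hX : Measurable X)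
    (hdist : ∀ k : ℕ, μ (X ⁻¹' {k})
      = ENNReal.ofReal ((n.choose k : ℝ) * p ^ k * (1 - p) ^ (n - k)))
    (c : ℝ) :
    ∫ ω, c ^ X ω ∂μ = (c * p + (1 - p)) ^ n := by
  have hmeas : ∀ k : ℕ, MeasurableSet (X ⁻¹' {k}) := fun k =>
    hX (measurableSet_singleton k)
  have hae : ∀ᵐ ω ∂μ, X ω ≤ n := by
    rw [MeasureTheory.ae_iff]
    have hsub : {ω | ¬ X ω ≤ n} ⊆ ⋃ k : ℕ, X ⁻¹' {n + 1 + k} := by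
      intro ω hω
      simp only [Set.mem_setOf_eq, not_le] at hω
      exact Set.mem_iUnion.2 ⟨X ω - (n + 1), by simp [Set.mem_preimage]; omega⟩
    refine measure_mono_null hsub (measure_iUnion_null fun k => ?_)
    rw [hdist]
    have : n.choose (n + 1 + k) = 0 := Nat.choose_eq_zero_of_lt (by omega)
    simp [this]
  have hcongr : ∀ᵐ ω ∂μ, c ^ X ω
      = ∑ k ∈ Finset.range (n + 1), Set.indicator (X ⁻¹' {k}) (fun _ => c ^ k) ω := by
    filter_upwards [hae] with ω hω
    rw [Finset.sum_eq_single (X ω)]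
    · simp [Set.indicator_apply]
    · intro k _ hk
      simp [Set.indicator_apply, Ne.symm hk]
    · intro hmem
      exact absurd (Finset.mem_range.2 (by omega)) hmem
  rw [integral_congr_ae hcongr, integral_finset_sum _ (fun k _ =>
    (integrable_const (c ^ k)).indicator (hmeas k))]
  have hnn : ∀ k : ℕ, (0:ℝ) ≤ (n.choose k : ℝ) * p ^ k * (1 - p) ^ (n - k) := fun k => by
    have h1p : (0:ℝ) ≤ 1 - p := by linarith
    positivity
  have : ∀ k ∈ Finset.range (n + 1),
      ∫ ω, Set.indicator (X ⁻¹' {k}) (fun _ => c ^ k) ω ∂μ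
        = (c * p) ^ k * (1 - p) ^ (n - k) * (n.choose k : ℝ) := by
    intro k _
    rw [integral_indicator_const _ (hmeas k), measureReal_def, hdist k, ENNReal.toReal_ofReal (hnn k),
      smul_eq_mul]
    ring
  rw [Finset.sum_congr rfl this, ← add_pow]

theorem binomial_quarter_pow_moments
    {Ω : Type*} [MeasurableSpace Ω] (μ : Measure Ω) [IsProbabilityMeasure μ]
    (n : ℕ) (hn : 1 ≤ n) (p : ℝ) (hp0 : 0 ≤ p) (hp1 : p ≤ 1)
    (X : Ω → ℕ) (hX : Measurable X)
    (hdist : ∀ k : ℕ, μ (X ⁻¹' {k})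
      = ENNReal.ofReal ((n.choose k : ℝ) * p ^ k * (1 - p) ^ (n - k))) :
    (∫ ω, (1 / 4 : ℝ) ^ X ω ∂μ = (1 - 3 / 4 * p) ^ n) ∧
    (∫ ω, (1 / 16 : ℝ) ^ X ω ∂μ = (1 - 15 / 16 * p) ^ n) ∧
    variance (fun ω => (1 / 4 : ℝ) ^ X ω) μ
      = (1 - 15 / 16 * p) ^ n - ((1 - 3 / 4 * p) ^ n) ^ 2 ∧
    variance (fun ω => (1 / 4 : ℝ) ^ X ω) μ
      ≤ ((1 - 3 / 4 * p) ^ n) ^ ((5 : ℝ) / 4) - ((1 - 3 / 4 * p) ^ n) ^ 2 := by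
  have h1 : ∫ ω, (1 / 4 : ℝ) ^ X ω ∂μ = (1 - 3 / 4 * p) ^ n := by
    rw [binom_integral_aux μ n p hp0 hp1 X hX hdist (1/4)]; ring_nf
  have h2 : ∫ ω, (1 / 16 : ℝ) ^ X ω ∂μ = (1 - 15 / 16 * p) ^ n := by
    rw [binom_integral_aux μ n p hp0 hp1 X hX hdist (1/16)]; ring_nf
  have hmem : MemLp (fun ω => (1 / 4 : ℝ) ^ X ω) 2 μ := by
    refine MemLp.of_bound ?_ 1 (Filter.Eventually.of_forall fun ω => ?_)
    · exact ((measurable_from_top (f := fun k : ℕ => (1/4:ℝ) ^ k)).comp hX).aestronglyMeasurable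
    · rw [Real.norm_eq_abs, abs_of_nonneg (by positivity)]
      exact pow_le_one₀ (by norm_num) (by norm_num)
  have hvar : variance (fun ω => (1 / 4 : ℝ) ^ X ω) μ
      = (1 - 15 / 16 * p) ^ n - ((1 - 3 / 4 * p) ^ n) ^ 2 := by
    rw [variance_eq_sub hmem, h1]
    congr 1
    rw [← h2]
    refine integral_congr_ae (Filter.Eventually.of_forall fun ω => ?_)
    show ((1 / 4 : ℝ) ^ X ω) ^ 2 = (1 / 16 : ℝ) ^ X ω
    rw [← pow_mul, mul_comm, pow_mul]
    norm_num
  have ha0 : (0:ℝ) ≤ 1 - 3 / 4 * p := by linarith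
  have hb0 : (0:ℝ) ≤ 1 - 15 / 16 * p := by linarith
  have h4 : (1 - 15 / 16 * p) ^ 4 ≤ (1 - 3 / 4 * p) ^ 5 := by
    nlinarith [sq_nonneg p, sq_nonneg (1 - p), mul_nonneg hp0 hp0, sq_nonneg (p * p),
      mul_nonneg (mul_nonneg hp0 hp0) hp0, sq_nonneg (p * (1 - p)),
      mul_nonneg (mul_nonneg (mul_nonneg hp0 hp0) hp0) (sub_nonneg.2 hp1),
      mul_nonneg (mul_nonneg (mul_nonneg (mul_nonneg hp0 hp0) hp0) hp0) (sub_nonneg.2 hp1)]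
  have hkey : (1 - 15 / 16 * p) ≤ (1 - 3 / 4 * p) ^ ((5:ℝ) / 4) := by
    have h := Real.rpow_le_rpow (by positivity) h4 (by norm_num : (0:ℝ) ≤ 1/4)
    rw [← Real.rpow_natCast (1 - 15 / 16 * p) 4, ← Real.rpow_natCast (1 - 3 / 4 * p) 5,
      ← Real.rpow_mul hb0, ← Real.rpow_mul ha0] at h
    norm_num at h
    linarith
  have hbn : (1 - 15 / 16 * p) ^ n ≤ ((1 - 3 / 4 * p) ^ n) ^ ((5:ℝ) / 4) := by
    calc (1 - 15 / 16 * p) ^ n ≤ ((1 - 3 / 4 * p) ^ ((5:ℝ) / 4)) ^ n :=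
          pow_le_pow_left₀ hb0 hkey n
      _ = ((1 - 3 / 4 * p) ^ n) ^ ((5:ℝ) / 4) := by
          rw [← Real.rpow_natCast ((1 - 3 / 4 * p) ^ ((5:ℝ)/4)) n,
            ← Real.rpow_natCast (1 - 3 / 4 * p) n, ← Real.rpow_mul ha0,
            ← Real.rpow_mul ha0, mul_comm ((5:ℝ)/4) (n:ℝ)]
  exact ⟨h1, h2, hvar, by rw [hvar]; exact sub_le_sub_right hbn _⟩
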